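/- Let γ > 1, α ≤ 1 (with α > 0), and let 0 < ρ_∞ < ρ̄, 0 < m_∞ < m̄. Then there exist constants C₁, C₂ ∈ (0,1), depending only on ρ̄, m̄, ρ_∞, m_∞, such that for all ρ ∈ (0, ρ̄] and m ∈ (0, m̄], C₁(m - m_∞)² + C₂(ρ - ρ_∞)² ≤ m ∫_{m_∞}^{m} (s - m_∞)/s² ds + ρ ∫_{ρ_∞}^{ρ} (s - ρ_∞)/s² ds. -/

import Mathlib

open Set

lemma energy_aux_key (a X x : ℝ) (ha : 0 < a) (haX : a ≤ X)
    (hx : 0 < x) (hxX : x ≤ X) :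
    (1 / (4 * (X + 1))) * (x - a) ^ 2 ≤ x * ∫ s in a..x, (s - a) / s ^ 2 := by
  have hX : 0 < X := lt_of_lt_of_le ha haX
  have hpos : ∀ s ∈ Set.uIcc a x, 0 < s := by
    intro s hs
    have h1 : min a x ≤ s := hs.1
    have : (0:ℝ) < min a x := lt_min ha hx
    linarith
  have hint : (∫ s in a..x, (s - a) / s ^ 2)
      = (Real.log x + a * x⁻¹) - (Real.log a + a * a⁻¹) := by
    apply intervalIntegral.integral_eq_sub_of_hasDerivAt
    · intro s hs
      have hs0 : s ≠ 0 := (hpos s hs).ne'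
      have h1 := Real.hasDerivAt_log hs0
      have h2 := (hasDerivAt_inv hs0).const_mul a
      convert h1.add h2 using 1
      · rfl
      field_simp
      ring
    · apply ContinuousOn.intervalIntegrable
      apply ContinuousOn.div (by fun_prop) (by fun_prop)
      intro s hs
      exact pow_ne_zero 2 (hpos s hs).ne'
  rw [hint]
  set u := Real.sqrt x with hu_def
  set v := Real.sqrt a with hv_def
  have hu : u ^ 2 = x := Real.sq_sqrt hx.le
  have hv : v ^ 2 = a := Real.sq_sqrt ha.le
  have hu0 : 0 < u := Real.sqrt_pos.2 hx
  have hv0 : 0 < v := Real.sqrt_pos.2 ha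
  have hlogu : Real.log u = Real.log x / 2 := Real.log_sqrt hx.le
  have hlogv : Real.log v = Real.log a / 2 := Real.log_sqrt ha.le
  have hlb : Real.log v - Real.log u ≤ v / u - 1 := by
    have h := Real.log_le_sub_one_of_pos (div_pos hv0 hu0)
    rwa [Real.log_div hv0.ne' hu0.ne'] at h
  have e1 : x * (Real.log x - Real.log a) = 2 * x * (Real.log u - Real.log v) := by
    rw [hlogu, hlogv]; ring
  have e2 : 2 * x * (1 - v / u) ≤ 2 * x * (Real.log u - Real.log v) := by
    apply mul_le_mul_of_nonneg_left (by linarith) (by positivity)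
  have e3 : 2 * x * (1 - v / u) = 2 * x - 2 * u * v := by
    rw [← hu]; field_simp
  have h1 : (u - v) ^ 2 ≤ x * (Real.log x - Real.log a) + a - x := by
    nlinarith [e1, e2, e3, hu, hv]
  have h3 : (u + v) ^ 2 ≤ 4 * (X + 1) := by nlinarith
  have h2' : (x - a) ^ 2 ≤ (4 * (X + 1)) * (u - v) ^ 2 := by
    nlinarith [mul_le_mul_of_nonneg_left h3 (sq_nonneg (u - v))]
  have h2 : (1 / (4 * (X + 1))) * (x - a) ^ 2 ≤ (u - v) ^ 2 := by
    have h4 : (1 / (4 * (X + 1))) * (x - a) ^ 2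
        ≤ (1 / (4 * (X + 1))) * ((4 * (X + 1)) * (u - v) ^ 2) := by
      apply mul_le_mul_of_nonneg_left h2' (by positivity)
    have h5 : (1 / (4 * (X + 1))) * ((4 * (X + 1)) * (u - v) ^ 2) = (u - v) ^ 2 := by
      field_simp
    linarith
  have hval : x * ((Real.log x + a * x⁻¹) - (Real.log a + a * a⁻¹))
      = x * (Real.log x - Real.log a) + a - x := by
    field_simp
    ring
  rw [hval]
  linarith

theorem energy_lower_bound
    (γ α ρinf minf ρbar mbar : ℝ)
    (hγ : 1 < γ) (hα0 : 0 < α) (hα : α ≤ 1)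
    (hρinf : 0 < ρinf) (hρ : ρinf < ρbar)
    (hminf : 0 < minf) (hm : minf < mbar) :
    ∃ C₁ C₂ : ℝ, C₁ ∈ Ioo (0:ℝ) 1 ∧ C₂ ∈ Ioo (0:ℝ) 1 ∧
      ∀ ρ m : ℝ, ρ ∈ Ioc (0:ℝ) ρbar → m ∈ Ioc (0:ℝ) mbar →
        C₁ * (m - minf)^2 + C₂ * (ρ - ρinf)^2
          ≤ m * (∫ s in minf..m, (s - minf) / s^2)
            + ρ * (∫ s in ρinf..ρ, (s - ρinf) / s^2) := by
  have hmbar : 0 < mbar := lt_trans hminf hm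
  have hρbar : 0 < ρbar := lt_trans hρinf hρ
  refine ⟨1 / (4 * (mbar + 1)), 1 / (4 * (ρbar + 1)), ⟨by positivity, ?_⟩,
    ⟨by positivity, ?_⟩, ?_⟩
  · rw [div_lt_one (by positivity)]; nlinarith
  · rw [div_lt_one (by positivity)]; nlinarith
  · intro ρ m hρmem hmmem
    have H1 := energy_aux_key minf mbar m hminf hm.le hmmem.1 hmmem.2
    have H2 := energy_aux_key ρinf ρbar ρ hρinf hρ.le hρmem.1 hρmem.2
    linarith
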